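/- Let K be an algebraically closed field of characteristic zero, d ≥ 1, and A = K⟨v1,…,vd⟩ the free associative K-algebra. If ⟪-,-⟫ : A⊗A → A⊗A is a mixed double algebra structure on A of weight λ = (λ1,…,λd) ∈ K^d, then {a,b} + {b,a} ∈ [A,A] for all a,b ∈ A; that is, ⟪-,-⟫ is a modified double bracket on A. -/

import Mathlib

open TensorProduct

noncomputable section

variable (K : Type*) [Field K]
variable (A : Type*) [Ring A] [Algebra K A]

/-- Leibniz rules for a double-bracket-type operation. -/
def LeibnizRules (D : A ⊗[K] A →ₗ[K] A ⊗[K] A) : Prop :=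
  (∀ a b c : A,
      D (a ⊗ₜ[K] (b * c)) =
        (b ⊗ₜ[K] (1 : A)) * D (a ⊗ₜ[K] c) + D (a ⊗ₜ[K] b) * ((1 : A) ⊗ₜ[K] c))
  ∧ (∀ a b c : A,
      D ((a * b) ⊗ₜ[K] c) =
        ((1 : A) ⊗ₜ[K] a) * D (b ⊗ₜ[K] c) + D (a ⊗ₜ[K] c) * (b ⊗ₜ[K] (1 : A)))

/-- The associated bracket `{a,b} = m(⟪a,b⟫)`. -/
def br (D : A ⊗[K] A →ₗ[K] A ⊗[K] A) (a b : A) : A :=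
  LinearMap.mul' K A (D (a ⊗ₜ[K] b))

/-- The K-span of commutators `[A,A]`. -/
def commutatorSpan : Submodule K A :=
  Submodule.span K {x : A | ∃ a b : A, x = a * b - b * a}

/-- The flip on `A ⊗ A`. -/
def flipT : A ⊗[K] A →ₗ[K] A ⊗[K] A := (TensorProduct.comm K A A).toLinearMap

/-- Swap of the last two tensor factors of `(A ⊗ A) ⊗ A`. -/
def swap23 : ((A ⊗[K] A) ⊗[K] A) →ₗ[K] ((A ⊗[K] A) ⊗[K] A) :=
  (TensorProduct.assoc K A A A).symm.toLinearMap ∘ₗ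
    (LinearMap.lTensor A (TensorProduct.comm K A A).toLinearMap) ∘ₗ
    (TensorProduct.assoc K A A A).toLinearMap

/-- `⟪a, -⟫_L` on double tensors: `b ⊗ c ↦ ⟪a,b⟫ ⊗ c`. -/
def dL (D : A ⊗[K] A →ₗ[K] A ⊗[K] A) (a : A) :
    A ⊗[K] A →ₗ[K] (A ⊗[K] A) ⊗[K] A :=
  LinearMap.rTensor A (D ∘ₗ TensorProduct.mk K A A a)

/-- `⟪a, -⟫_R` on double tensors: `b ⊗ c ↦ b ⊗ ⟪a,c⟫`. -/
def dR (D : A ⊗[K] A →ₗ[K] A ⊗[K] A) (a : A) :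
    A ⊗[K] A →ₗ[K] (A ⊗[K] A) ⊗[K] A :=
  (TensorProduct.assoc K A A A).symm.toLinearMap ∘ₗ
    LinearMap.lTensor A (D ∘ₗ TensorProduct.mk K A A a)

/-- `⟪-, c⟫_L` on double tensors: `b ⊗ b' ↦ ⟪b,c⟫' ⊗ b' ⊗ ⟪b,c⟫''`. -/
def dLfst (D : A ⊗[K] A →ₗ[K] A ⊗[K] A) (c : A) :
    A ⊗[K] A →ₗ[K] (A ⊗[K] A) ⊗[K] A :=
  swap23 K A ∘ₗ LinearMap.rTensor A (D ∘ₗ (TensorProduct.mk K A A).flip c)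

/-- The double Jacobiator. -/
def DJac (D : A ⊗[K] A →ₗ[K] A ⊗[K] A) (a b c : A) : (A ⊗[K] A) ⊗[K] A :=
  dL K A D a (D (b ⊗ₜ[K] c)) - dR K A D b (D (a ⊗ₜ[K] c)) - dLfst K A D c (D (a ⊗ₜ[K] b))

/-- `c ⊗₁ (-)` : `w' ⊗ w'' ↦ w' ⊗ c ⊗ w''`. -/
def otimes1 (c : A) : A ⊗[K] A →ₗ[K] (A ⊗[K] A) ⊗[K] A :=
  LinearMap.rTensor A ((TensorProduct.mk K A A).flip c)

variable {ι : Type*}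

/-- Mixed double algebra structure of weight `lam` with respect to the generators `v`. -/
def IsMixedDouble (v : ι → A) (lam : ι → K) (D : A ⊗[K] A →ₗ[K] A ⊗[K] A) : Prop :=
  LeibnizRules K A D ∧
  ∀ i j : ι,
    D (v i ⊗ₜ[K] v j) + flipT K A (D (v j ⊗ₜ[K] v i)) =
      ((lam i + lam j) / 2) • (v i ⊗ₜ[K] v j - v j ⊗ₜ[K] v i) +
      ((lam i - lam j) / 2) • ((1 : A) ⊗ₜ[K] (v i * v j) - (v j * v i) ⊗ₜ[K] (1 : A))

/-- Mixed double Poisson algebra structure of weight `lam` w.r.t. the generators `v`. -/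
def IsMixedDoublePoisson (v : ι → A) (lam : ι → K) (D : A ⊗[K] A →ₗ[K] A ⊗[K] A) : Prop :=
  IsMixedDouble K A v lam D ∧
  ∀ i j k : ι,
    DJac K A D (v i) (v j) (v k) =
      (-((lam i + lam j) / 2)) • otimes1 K A (v j) (D (v i ⊗ₜ[K] v k)) +
      ((lam i - lam j) / 2) •
        otimes1 K A (1 : A) (((1 : A) ⊗ₜ[K] v j) * D (v i ⊗ₜ[K] v k))

/-- Modified double Poisson bracket. -/
def IsModifiedDoublePoisson (D : A ⊗[K] A →ₗ[K] A ⊗[K] A) : Prop :=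
  LeibnizRules K A D ∧
  (∀ a b : A, br K A D a b + br K A D b a ∈ commutatorSpan K A) ∧
  (∀ a b c : A,
    br K A D a (br K A D b c) - br K A D b (br K A D a c) - br K A D (br K A D a b) c = 0)

end



section MyAux
open TensorProduct

variable {K : Type*} [Field K] {A : Type*} [Ring A] [Algebra K A]

lemma myFlipT_tmul (x y : A) : flipT K A (x ⊗ₜ[K] y) = y ⊗ₜ[K] x := rfl

lemma myFlipT_mul (u v : A ⊗[K] A) :
    flipT K A (u * v) = flipT K A u * flipT K A v := by
  have h : flipT K A = (Algebra.TensorProduct.comm K A A).toLinearMap := by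
    apply TensorProduct.ext'
    intro x y
    rfl
  rw [h]
  simp [map_mul]

lemma my_mul'_left (b : A) (u : A ⊗[K] A) :
    LinearMap.mul' K A ((b ⊗ₜ[K] (1:A)) * u) = b * LinearMap.mul' K A u := by
  induction u using TensorProduct.induction_on with
  | zero => simp
  | tmul x y => simp [Algebra.TensorProduct.tmul_mul_tmul, mul_assoc]
  | add p q hp hq => simp [mul_add, hp, hq]

lemma my_mul'_right (c : A) (u : A ⊗[K] A) :
    LinearMap.mul' K A (u * ((1:A) ⊗ₜ[K] c)) = LinearMap.mul' K A u * c := by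
  induction u using TensorProduct.induction_on with
  | zero => simp
  | tmul x y => simp [Algebra.TensorProduct.tmul_mul_tmul, mul_assoc]
  | add p q hp hq => simp [add_mul, hp, hq]

lemma my_mul'_mid (a : A) (u : A ⊗[K] A) :
    LinearMap.mul' K A (((1:A) ⊗ₜ[K] a) * u) = LinearMap.mul' K A (u * (a ⊗ₜ[K] (1:A))) := by
  induction u using TensorProduct.induction_on with
  | zero => simp
  | tmul x y => simp [Algebra.TensorProduct.tmul_mul_tmul, mul_assoc]
  | add p q hp hq => simp [mul_add, add_mul, hp, hq]

lemma my_comm_mem (x y : A) : x * y - y * x ∈ commutatorSpan K A :=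
  Submodule.subset_span ⟨x, y, rfl⟩

lemma my_mul'_sub_flip_mem (u : A ⊗[K] A) :
    LinearMap.mul' K A u - LinearMap.mul' K A (flipT K A u) ∈ commutatorSpan K A := by
  induction u using TensorProduct.induction_on with
  | zero => simp [Submodule.zero_mem]
  | tmul x y => simpa [myFlipT_tmul] using my_comm_mem (K := K) x y
  | add p q hp hq =>
      have h := Submodule.add_mem _ hp hq
      convert h using 1
      simp only [map_add]
      abel

lemma my_ring_aux1 {R : Type*} [Ring R] (x y z w s t P Q F : R)
    (hxy : x * y = y * x) (hzw : z * w = w * z) :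
    x * (y * Q + P * z) - (y * Q + P * z) * w + (y * s) * F - F * (t * z) =
      y * (x * Q - Q * w + s * F - F * z) + (x * P - P * w + y * F - F * t) * z := by
  simp only [mul_add, add_mul, mul_sub, sub_mul, ← mul_assoc]
  rw [hxy, show P * z * w = P * w * z by rw [mul_assoc, hzw, ← mul_assoc]]
  abel

lemma my_ring_aux2 {R : Type*} [Ring R] (p q r s c1 c2 G Fa Fb : R)
    (h1 : c1 * p = p * c1) (h2 : s * c2 = c2 * s) :
    (p * q) * G - G * (r * s) + c1 * (p * Fb + Fa * s) - (p * Fb + Fa * s) * c2 =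
      p * (q * G - G * s + c1 * Fb - Fb * c2) + (p * G - G * r + c1 * Fa - Fa * c2) * s := by
  simp only [mul_add, add_mul, mul_sub, sub_mul, ← mul_assoc]
  rw [h1, show Fa * s * c2 = Fa * c2 * s by rw [mul_assoc, h2, ← mul_assoc]]
  abel

/-- The main engine: on any `K`-algebra generated by elements `v i`, a map `D`
satisfying the Leibniz rules and the mixed generator condition, together with an
outer double derivation `Φ` with values `lam i • (v i ⊗ 1 + 1 ⊗ v i)`, has
`H0`-skew-symmetric associated bracket. -/
lemma my_main {d : ℕ} (v : Fin d → A)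
    (htop : Algebra.adjoin K (Set.range v) = ⊤)
    (lam : Fin d → K)
    (D : A ⊗[K] A →ₗ[K] A ⊗[K] A)
    (hL1 : ∀ a b c : A,
      D (a ⊗ₜ[K] (b * c)) =
        (b ⊗ₜ[K] (1 : A)) * D (a ⊗ₜ[K] c) + D (a ⊗ₜ[K] b) * ((1 : A) ⊗ₜ[K] c))
    (hL2 : ∀ a b c : A,
      D ((a * b) ⊗ₜ[K] c) =
        ((1 : A) ⊗ₜ[K] a) * D (b ⊗ₜ[K] c) + D (a ⊗ₜ[K] c) * (b ⊗ₜ[K] (1 : A)))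
    (hgen : ∀ i j : Fin d,
      D (v i ⊗ₜ[K] v j) + flipT K A (D (v j ⊗ₜ[K] v i)) =
        ((lam i + lam j) / 2) • (v i ⊗ₜ[K] v j - v j ⊗ₜ[K] v i) +
        ((lam i - lam j) / 2) • ((1 : A) ⊗ₜ[K] (v i * v j) - (v j * v i) ⊗ₜ[K] (1 : A)))
    (Φ : A →ₗ[K] A ⊗[K] A)
    (hΦι : ∀ i, Φ (v i) = lam i • (v i ⊗ₜ[K] (1:A) + (1:A) ⊗ₜ[K] v i))
    (hΦmul : ∀ a b : A, Φ (a * b) = (a ⊗ₜ[K] (1:A)) * Φ b + Φ a * ((1:A) ⊗ₜ[K] b)) :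
    ∀ a b : A, br K A D a b + br K A D b a ∈ commutatorSpan K A := by
  set fΦ : A → A ⊗[K] A := fun a => flipT K A (Φ a) with hfΦ
  set σ0 : A → A → A ⊗[K] A := fun a b =>
    (-(2⁻¹ : K)) • (((1:A) ⊗ₜ[K] a) * Φ b - Φ b * (a ⊗ₜ[K] (1:A))
      + (b ⊗ₜ[K] (1:A)) * fΦ a - fΦ a * ((1:A) ⊗ₜ[K] b)) with hσ0
  set σD : A → A → A ⊗[K] A := fun a b =>
    D (a ⊗ₜ[K] b) + flipT K A (D (b ⊗ₜ[K] a)) with hσD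
  -- basic vanishing
  have hD10 : ∀ x : A, D (x ⊗ₜ[K] (1:A)) = 0 := by
    intro x
    have h := hL1 x 1 1
    rw [one_mul, ← Algebra.TensorProduct.one_def, one_mul, mul_one] at h
    exact (right_eq_add.mp h)
  have hD01 : ∀ x : A, D ((1:A) ⊗ₜ[K] x) = 0 := by
    intro x
    have h := hL2 1 1 x
    rw [one_mul, ← Algebra.TensorProduct.one_def, one_mul, mul_one] at h
    exact (right_eq_add.mp h)
  have hΦ1 : Φ (1 : A) = 0 := by
    have h := hΦmul 1 1
    rw [one_mul, ← Algebra.TensorProduct.one_def, one_mul, mul_one] at h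
    exact (right_eq_add.mp h)
  have hfΦ1 : fΦ (1 : A) = 0 := by simp [hfΦ, hΦ1]
  have hfΦmul : ∀ a b : A, fΦ (a * b)
      = ((1:A) ⊗ₜ[K] a) * fΦ b + fΦ a * (b ⊗ₜ[K] (1:A)) := by
    intro a b
    simp only [hfΦ]
    rw [hΦmul, map_add, myFlipT_mul, myFlipT_mul, myFlipT_tmul, myFlipT_tmul]
  -- Leibniz identities for σD
  have LD1 : ∀ a b c : A, σD a (b * c)
      = (b ⊗ₜ[K] (1:A)) * σD a c + σD a b * ((1:A) ⊗ₜ[K] c) := by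
    intro a b c
    simp only [hσD]
    rw [hL1 a b c, hL2 b c a, map_add, myFlipT_mul, myFlipT_mul, myFlipT_tmul, myFlipT_tmul]
    simp only [mul_add, add_mul]
    abel
  have LD2 : ∀ a b c : A, σD (a * b) c
      = ((1:A) ⊗ₜ[K] a) * σD b c + σD a c * (b ⊗ₜ[K] (1:A)) := by
    intro a b c
    simp only [hσD]
    rw [hL2 a b c, hL1 c a b, map_add, myFlipT_mul, myFlipT_mul, myFlipT_tmul, myFlipT_tmul]
    simp only [mul_add, add_mul]
    abel
  -- Leibniz identities for σ0
  have L01 : ∀ a b c : A, σ0 a (b * c)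
      = (b ⊗ₜ[K] (1:A)) * σ0 a c + σ0 a b * ((1:A) ⊗ₜ[K] c) := by
    intro a b c
    simp only [hσ0]
    rw [mul_smul_comm, smul_mul_assoc, ← smul_add]
    congr 1
    rw [hΦmul b c,
      show ((b*c : A) ⊗ₜ[K] (1:A)) = (b ⊗ₜ[K] (1:A)) * (c ⊗ₜ[K] (1:A)) by
        simp [Algebra.TensorProduct.tmul_mul_tmul],
      show ((1:A) ⊗ₜ[K] (b*c : A)) = ((1:A) ⊗ₜ[K] b) * ((1:A) ⊗ₜ[K] c) by
        simp [Algebra.TensorProduct.tmul_mul_tmul]]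
    exact my_ring_aux1 _ _ _ _ _ _ _ _ _
      (by simp [Algebra.TensorProduct.tmul_mul_tmul])
      (by simp [Algebra.TensorProduct.tmul_mul_tmul])
  have L02 : ∀ a b c : A, σ0 (a * b) c
      = ((1:A) ⊗ₜ[K] a) * σ0 b c + σ0 a c * (b ⊗ₜ[K] (1:A)) := by
    intro a b c
    simp only [hσ0]
    rw [mul_smul_comm, smul_mul_assoc, ← smul_add]
    congr 1
    rw [hfΦmul a b,
      show ((1:A) ⊗ₜ[K] (a*b : A)) = ((1:A) ⊗ₜ[K] a) * ((1:A) ⊗ₜ[K] b) by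
        simp [Algebra.TensorProduct.tmul_mul_tmul],
      show ((a*b : A) ⊗ₜ[K] (1:A)) = (a ⊗ₜ[K] (1:A)) * (b ⊗ₜ[K] (1:A)) by
        simp [Algebra.TensorProduct.tmul_mul_tmul]]
    exact my_ring_aux2 _ _ _ _ _ _ _ _ _
      (by simp [Algebra.TensorProduct.tmul_mul_tmul])
      (by simp [Algebra.TensorProduct.tmul_mul_tmul])
  -- values on generators agree
  have hgen0 : ∀ i j, σD (v i) (v j) = σ0 (v i) (v j) := by
    intro i j
    have h := hgen i j
    simp only [hσD, hσ0]
    rw [h, hΦι j]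
    simp only [hfΦ, hΦι i, map_smul, map_add, myFlipT_tmul]
    simp only [mul_add, add_mul, mul_smul_comm, smul_mul_assoc,
      Algebra.TensorProduct.tmul_mul_tmul, one_mul, mul_one, smul_add, smul_sub]
    match_scalars <;> ring
  -- vanishing at 1
  have σD1r : ∀ x : A, σD x 1 = 0 := by
    intro x; simp [hσD, hD10, hD01]
  have σD1l : ∀ x : A, σD 1 x = 0 := by
    intro x; simp [hσD, hD10, hD01]
  have σ01r : ∀ x : A, σ0 x 1 = 0 := by
    intro x
    simp only [hσ0, hΦ1, mul_zero, zero_mul, ← Algebra.TensorProduct.one_def, one_mul, mul_one]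
    simp
  have σ01l : ∀ x : A, σ0 1 x = 0 := by
    intro x
    simp only [hσ0, hfΦ1, mul_zero, zero_mul, ← Algebra.TensorProduct.one_def, one_mul, mul_one]
    simp
  -- additivity
  have σDaddr : ∀ x y z : A, σD x (y + z) = σD x y + σD x z := by
    intro x y z
    simp only [hσD, TensorProduct.tmul_add, TensorProduct.add_tmul, map_add]
    abel
  have σDaddl : ∀ x y z : A, σD (y + z) x = σD y x + σD z x := by
    intro x y z
    simp only [hσD, TensorProduct.tmul_add, TensorProduct.add_tmul, map_add]
    abel
  have σ0addr : ∀ x y z : A, σ0 x (y + z) = σ0 x y + σ0 x z := by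
    intro x y z
    simp only [hσ0, map_add, TensorProduct.add_tmul, TensorProduct.tmul_add,
      mul_add, add_mul, ← smul_add]
    congr 1
    abel
  have σ0addl : ∀ x y z : A, σ0 (y + z) x = σ0 y x + σ0 z x := by
    intro x y z
    simp only [hσ0, hfΦ, map_add, TensorProduct.add_tmul, TensorProduct.tmul_add,
      mul_add, add_mul, ← smul_add]
    congr 1
    abel
  -- smul
  have σDsmulr : ∀ (r : K) (x y : A), σD x (r • y) = r • σD x y := by
    intro r x y
    simp only [hσD]
    rw [TensorProduct.tmul_smul, ← TensorProduct.smul_tmul', map_smul, map_smul, map_smul,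
      ← smul_add]
  have σDsmull : ∀ (r : K) (x y : A), σD (r • y) x = r • σD y x := by
    intro r x y
    simp only [hσD]
    rw [TensorProduct.tmul_smul, ← TensorProduct.smul_tmul', map_smul, map_smul, map_smul,
      ← smul_add]
  have σ0smulr : ∀ (r : K) (x y : A), σ0 x (r • y) = r • σ0 x y := by
    intro r x y
    simp only [hσ0]
    rw [map_smul, TensorProduct.tmul_smul, ← TensorProduct.smul_tmul',
      mul_smul_comm, smul_mul_assoc, smul_mul_assoc, mul_smul_comm,
      ← smul_sub, ← smul_add, ← smul_sub, smul_comm (-(2⁻¹ : K)) r]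
  have σ0smull : ∀ (r : K) (x y : A), σ0 (r • y) x = r • σ0 y x := by
    intro r x y
    simp only [hσ0, hfΦ]
    rw [map_smul, map_smul, TensorProduct.tmul_smul, ← TensorProduct.smul_tmul',
      mul_smul_comm, smul_mul_assoc, mul_smul_comm, smul_mul_assoc,
      ← smul_sub, ← smul_add, ← smul_sub, smul_comm (-(2⁻¹ : K)) r]
  -- the key identification, by induction over the generating set
  have key : ∀ a b : A, σD a b = σ0 a b := by
    have hmemT : ∀ x : A, x ∈ Algebra.adjoin K (Set.range v) := by
      intro x; rw [htop]; exact Algebra.mem_top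
    have step1 : ∀ (i : Fin d) (b : A), σD (v i) b = σ0 (v i) b := by
      intro i b
      refine Algebra.adjoin_induction (hx := hmemT b)
        (p := fun x _ => σD (v i) x = σ0 (v i) x) ?_ ?_ ?_ ?_
      · rintro x ⟨j, rfl⟩
        exact hgen0 i j
      · intro r
        rw [Algebra.algebraMap_eq_smul_one, σDsmulr, σ0smulr, σD1r, σ01r]
      · intro x y _ _ hx hy
        rw [σDaddr, σ0addr, hx, hy]
      · intro x y _ _ hx hy
        rw [LD1, L01, hx, hy]
    intro a
    refine Algebra.adjoin_induction (hx := hmemT a)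
      (p := fun x _ => ∀ b : A, σD x b = σ0 x b) ?_ ?_ ?_ ?_
    · rintro x ⟨i, rfl⟩
      exact step1 i
    · intro r b
      rw [Algebra.algebraMap_eq_smul_one, σDsmull, σ0smull, σD1l, σ01l]
    · intro x y _ _ hx hy b
      rw [σDaddl, σ0addl, hx, hy]
    · intro x y _ _ hx hy b
      rw [LD2, L02, hx b, hy b]
  -- conclusion
  intro a b
  have hmem0 : LinearMap.mul' K A (σ0 a b) ∈ commutatorSpan K A := by
    have hval : LinearMap.mul' K A (σ0 a b)
        = (-(2⁻¹ : K)) • (b * LinearMap.mul' K A (fΦ a) - LinearMap.mul' K A (fΦ a) * b) := by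
      simp only [hσ0, map_smul, map_sub, map_add]
      rw [my_mul'_mid, my_mul'_left, my_mul'_right]
      congr 1
      abel
    rw [hval]
    exact Submodule.smul_mem _ _ (my_comm_mem _ _)
  have hsplit : br K A D a b + br K A D b a
      = LinearMap.mul' K A (σ0 a b)
        + (LinearMap.mul' K A (D (b ⊗ₜ[K] a))
            - LinearMap.mul' K A (flipT K A (D (b ⊗ₜ[K] a)))) := by
    have h := key a b
    simp only [hσD] at h
    show LinearMap.mul' K A (D (a ⊗ₜ[K] b)) + LinearMap.mul' K A (D (b ⊗ₜ[K] a)) = _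
    rw [← h, map_add]
    abel
  rw [hsplit]
  exact Submodule.add_mem _ hmem0 (my_mul'_sub_flip_mem _)

end MyAux

section MyDD
open TensorProduct

/-- Existence of an "outer double derivation" on the free algebra with prescribed
values on the generators, built via upper triangular 2×2 matrices. -/
lemma my_exists_outer_dd {K : Type*} [Field K] {d : ℕ}
    (w : Fin d → FreeAlgebra K (Fin d) ⊗[K] FreeAlgebra K (Fin d)) :
    ∃ Φ : FreeAlgebra K (Fin d) →ₗ[K] FreeAlgebra K (Fin d) ⊗[K] FreeAlgebra K (Fin d),
      (∀ i, Φ (FreeAlgebra.ι K i) = w i) ∧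
      (∀ a b, Φ (a * b) = (a ⊗ₜ[K] (1 : FreeAlgebra K (Fin d))) * Φ b
          + Φ a * ((1 : FreeAlgebra K (Fin d)) ⊗ₜ[K] b)) := by
  classical
  let M : Fin d → Matrix (Fin 2) (Fin 2) (FreeAlgebra K (Fin d) ⊗[K] FreeAlgebra K (Fin d)) :=
    fun i => !![FreeAlgebra.ι K i ⊗ₜ[K] (1 : FreeAlgebra K (Fin d)), w i;
                0, (1 : FreeAlgebra K (Fin d)) ⊗ₜ[K] FreeAlgebra.ι K i]
  let ρ := FreeAlgebra.lift K M
  have key : ∀ a : FreeAlgebra K (Fin d),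
      ρ a 0 0 = a ⊗ₜ[K] (1 : FreeAlgebra K (Fin d)) ∧
      ρ a 1 1 = (1 : FreeAlgebra K (Fin d)) ⊗ₜ[K] a ∧ ρ a 1 0 = 0 := by
    intro a
    refine FreeAlgebra.induction K (Fin d) ?_ ?_ ?_ ?_ a
    · intro r
      have h : ρ (algebraMap K _ r) = algebraMap K _ r := by simp [ρ]
      rw [h]
      refine ⟨?_, ?_, ?_⟩ <;>
        simp [Matrix.algebraMap_matrix_apply, Algebra.TensorProduct.one_def,
          Algebra.algebraMap_eq_smul_one, TensorProduct.smul_tmul', TensorProduct.tmul_smul]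
    · intro i
      have h : ρ (FreeAlgebra.ι K i) = M i := FreeAlgebra.lift_ι_apply _ _
      rw [h]
      refine ⟨?_, ?_, ?_⟩ <;> simp [M]
    · intro x y hx hy
      have h : ρ (x * y) = ρ x * ρ y := map_mul ρ x y
      rw [h]
      refine ⟨?_, ?_, ?_⟩ <;>
        simp [Matrix.mul_apply, Fin.sum_univ_two, hx.1, hx.2.1, hx.2.2, hy.1, hy.2.1, hy.2.2,
          Algebra.TensorProduct.tmul_mul_tmul]
    · intro x y hx hy
      have h : ρ (x + y) = ρ x + ρ y := map_add ρ x y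
      rw [h]
      refine ⟨?_, ?_, ?_⟩ <;>
        simp [Matrix.add_apply, hx.1, hx.2.1, hx.2.2, hy.1, hy.2.1, hy.2.2,
          TensorProduct.add_tmul, TensorProduct.tmul_add]
  refine ⟨{ toFun := fun a => ρ a 0 1,
            map_add' := by intro x y; simp [map_add, Matrix.add_apply],
            map_smul' := by intro r x; simp [map_smul, Matrix.smul_apply] }, ?_, ?_⟩
  · intro i
    have h : ρ (FreeAlgebra.ι K i) = M i := FreeAlgebra.lift_ι_apply _ _
    simp [h, M]
  · intro a b
    have h : ρ (a * b) = ρ a * ρ b := map_mul ρ a b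
    simp only [LinearMap.coe_mk, AddHom.coe_mk, h, Matrix.mul_apply, Fin.sum_univ_two]
    rw [(key a).1, (key b).2.1]

end MyDD

theorem stmt4 {K : Type*} [Field K] [IsAlgClosed K] [CharZero K]
    {d : ℕ} (hd : 1 ≤ d) (lam : Fin d → K)
    (D : FreeAlgebra K (Fin d) ⊗[K] FreeAlgebra K (Fin d) →ₗ[K] FreeAlgebra K (Fin d) ⊗[K] FreeAlgebra K (Fin d))
    (hD : IsMixedDouble K (FreeAlgebra K (Fin d)) (FreeAlgebra.ι K) lam D) :
    ∀ a b : FreeAlgebra K (Fin d),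
      br K (FreeAlgebra K (Fin d)) D a b + br K (FreeAlgebra K (Fin d)) D b a ∈ commutatorSpan K (FreeAlgebra K (Fin d)) := by
  obtain ⟨⟨hL1, hL2⟩, hgen⟩ := hD
  obtain ⟨Φ, hΦι, hΦmul⟩ := my_exists_outer_dd (K := K)
    (fun i => lam i • (FreeAlgebra.ι K i ⊗ₜ[K] (1 : FreeAlgebra K (Fin d))
      + (1 : FreeAlgebra K (Fin d)) ⊗ₜ[K] FreeAlgebra.ι K i))
  exact my_main (FreeAlgebra.ι K) (FreeAlgebra.adjoin_range_ι K (Fin d)) lam D hL1 hL2 hgen Φ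
    hΦι hΦmul
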